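/- If Bott matrices A, B ∈ 𝔅(n) are Bott equivalent, then they have the same rank over 𝔽₂: rank A = rank B. -/

import Mathlib

open Matrix

/-- A Bott matrix: conjugate by a permutation matrix to a strictly upper
triangular binary matrix. -/
def IsBott {n : ℕ} (A : Matrix (Fin n) (Fin n) (ZMod 2)) : Prop :=
  ∃ (σ : Equiv.Perm (Fin n)) (B : Matrix (Fin n) (Fin n) (ZMod 2)),
    (∀ i j : Fin n, j ≤ i → B i j = 0) ∧
    A = σ.permMatrix (ZMod 2) * B * (σ⁻¹).permMatrix (ZMod 2)

/-- (Op1) conjugation by a permutation matrix. -/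
def PhiP {n : ℕ} (σ : Equiv.Perm (Fin n)) (A : Matrix (Fin n) (Fin n) (ZMod 2)) :
    Matrix (Fin n) (Fin n) (ZMod 2) :=
  σ.permMatrix (ZMod 2) * A * (σ⁻¹).permMatrix (ZMod 2)

/-- (Op2) `Φ_k(A)_j = A_j + A^k_j A_k`. -/
def Phi2 {n : ℕ} (k : Fin n) (A : Matrix (Fin n) (Fin n) (ZMod 2)) :
    Matrix (Fin n) (Fin n) (ZMod 2) :=
  fun i j => A i j + A k j * A i k

/-- (Op3) `Φ^{ℓ,m}(A)`: add the `ℓ`-th row to the `m`-th row. -/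
def Phi3 {n : ℕ} (l m : Fin n) (A : Matrix (Fin n) (Fin n) (ZMod 2)) :
    Matrix (Fin n) (Fin n) (ZMod 2) :=
  fun i j => if i = m then A l j + A m j else A i j

/-- One application of one of the operations (Op1), (Op2), (Op3). -/
inductive BottStep {n : ℕ} :
    Matrix (Fin n) (Fin n) (ZMod 2) → Matrix (Fin n) (Fin n) (ZMod 2) → Prop
  | op1 (σ : Equiv.Perm (Fin n)) (A) : BottStep A (PhiP σ A)
  | op2 (k : Fin n) (A) : BottStep A (Phi2 k A)
  | op3 (l m : Fin n) (A) (h : l ≠ m) (hc : ∀ i, A i l = A i m) :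
      BottStep A (Phi3 l m A)

/-- Bott equivalence: a finite sequence of the operations (Op1)--(Op3). -/
def BottEquivM {n : ℕ} (A B : Matrix (Fin n) (Fin n) (ZMod 2)) : Prop :=
  Relation.ReflTransGen BottStep A B

set_option linter.unusedVariables false


/-- Invariant: there is an ordering making the matrix strictly upper triangular
(as a digraph condition). -/
def Good {n : ℕ} (A : Matrix (Fin n) (Fin n) (ZMod 2)) : Prop :=
  ∃ f : Fin n → ℕ, ∀ i j, A i j ≠ 0 → f i < f j

lemma phiP_apply {n : ℕ} (σ : Equiv.Perm (Fin n)) (A : Matrix (Fin n) (Fin n) (ZMod 2)) :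
    PhiP σ A = A.submatrix σ σ := by
  unfold PhiP Equiv.Perm.permMatrix
  rw [PEquiv.toMatrix_toPEquiv_mul, PEquiv.mul_toMatrix_toPEquiv]
  ext i j
  simp [Equiv.Perm.inv_def]

lemma good_of_isBott {n : ℕ} {A : Matrix (Fin n) (Fin n) (ZMod 2)} (hA : IsBott A) :
    Good A := by
  obtain ⟨σ, Bm, hB, rfl⟩ := hA
  have h := phiP_apply σ Bm
  rw [show PhiP σ Bm = σ.permMatrix (ZMod 2) * Bm * (σ⁻¹).permMatrix (ZMod 2) from rfl] at h
  refine ⟨fun i => (σ i : ℕ), fun i j hij => ?_⟩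
  rw [h, submatrix_apply] at hij
  have : ¬ (σ j ≤ σ i) := fun hle => hij (hB _ _ hle)
  exact_mod_cast lt_of_not_ge this

lemma good_diag {n : ℕ} {A : Matrix (Fin n) (Fin n) (ZMod 2)} (hA : Good A) (i : Fin n) :
    A i i = 0 := by
  obtain ⟨f, hf⟩ := hA
  by_contra h
  exact lt_irrefl (f i) (hf i i h)

lemma good_phiP {n : ℕ} (σ : Equiv.Perm (Fin n)) {A : Matrix (Fin n) (Fin n) (ZMod 2)}
    (hA : Good A) : Good (PhiP σ A) := by
  obtain ⟨f, hf⟩ := hA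
  refine ⟨fun i => f (σ i), fun i j hij => ?_⟩
  rw [phiP_apply] at hij
  exact hf _ _ hij

lemma good_phi2 {n : ℕ} (k : Fin n) {A : Matrix (Fin n) (Fin n) (ZMod 2)}
    (hA : Good A) : Good (Phi2 k A) := by
  obtain ⟨f, hf⟩ := hA
  refine ⟨f, fun i j hij => ?_⟩
  simp only [Phi2] at hij
  by_cases h1 : A i j ≠ 0
  · exact hf _ _ h1
  · push_neg at h1
    rw [h1, zero_add] at hij
    have h2 : A k j ≠ 0 := fun h => hij (by rw [h, zero_mul])
    have h3 : A i k ≠ 0 := fun h => hij (by rw [h, mul_zero])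
    exact (hf _ _ h3).trans (hf _ _ h2)

lemma good_phi3 {n : ℕ} (l m : Fin n) {A : Matrix (Fin n) (Fin n) (ZMod 2)}
    (hc : ∀ i, A i l = A i m) (hA : Good A) : Good (Phi3 l m A) := by
  obtain ⟨f, hf⟩ := hA
  refine ⟨fun i => if i = m then 2 * min (f l) (f m) + 1 else 2 * f i,
    fun i j hij => ?_⟩
  simp only [Phi3] at hij
  by_cases him : i = m <;> by_cases hjm : j = m <;>
    simp only [him, hjm, if_pos rfl, if_neg, if_true, if_false] at hij ⊢
  · -- i = m, j = m : entry is A l m + A m m = A l l + A m m = 0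
    exfalso
    apply hij
    rw [← hc l, good_diag ⟨f, hf⟩, good_diag ⟨f, hf⟩, add_zero]
  · -- i = m, j ≠ m : A l j ≠ 0 or A m j ≠ 0
    have : A l j ≠ 0 ∨ A m j ≠ 0 := by
      by_contra hcon
      push_neg at hcon
      rw [hcon.1, hcon.2, add_zero] at hij
      exact hij rfl
    have hmin : min (f l) (f m) < f j := by
      rcases this with h | h
      · exact lt_of_le_of_lt (min_le_left _ _) (hf _ _ h)
      · exact lt_of_le_of_lt (min_le_right _ _) (hf _ _ h)
    omega
  · -- i ≠ m, j = m : A i m ≠ 0 and A i l = A i m ≠ 0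
    have h1 : f i < f m := hf _ _ hij
    have h2 : f i < f l := hf _ _ (by rw [hc i]; exact hij)
    omega
  · have := hf _ _ hij; omega

lemma rank_phiP {n : ℕ} (σ : Equiv.Perm (Fin n)) (A : Matrix (Fin n) (Fin n) (ZMod 2)) :
    (PhiP σ A).rank = A.rank := by
  rw [phiP_apply]
  exact Matrix.rank_submatrix A σ σ

lemma rank_phi2 {n : ℕ} (k : Fin n) {A : Matrix (Fin n) (Fin n) (ZMod 2)}
    (hkk : A k k = 0) : (Phi2 k A).rank = A.rank := by
  set C : Matrix (Fin n) (Fin n) (ZMod 2) :=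
    fun i j => if i = k then A k j else 0 with hC
  have hAC : A * C = fun i j => A i k * A k j := by
    ext i j
    rw [mul_apply]
    simp [hC, mul_apply, mul_ite, mul_zero, Finset.sum_ite_eq', Finset.mem_univ]
  have hAM : Phi2 k A = A * (1 + C) := by
    rw [mul_add, mul_one, hAC]
    ext i j
    change _ = A i j + A i k * A k j
    simp [Phi2]
    ring
  have hCC : C * C = 0 := by
    ext i j
    rw [mul_apply]
    by_cases hik : i = k
    · simp [hC, mul_apply, hik, mul_ite, mul_zero, ite_mul, zero_mul,
        Finset.sum_ite_eq', Finset.mem_univ, hkk]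
    · simp [hC, mul_apply, hik]
  have hMM : (1 + C) * (1 + C) = 1 := by
    rw [add_mul, mul_add, mul_add, one_mul, mul_one, hCC, add_zero]
    have : C + C = 0 := by
      ext i j
      exact CharTwo.add_self_eq_zero _
    rw [one_mul, add_assoc, this, add_zero]
  have hunit : IsUnit (1 + C).det := Matrix.isUnit_det_of_right_inverse hMM
  rw [hAM]
  exact Matrix.rank_mul_eq_left_of_isUnit_det (1 + C) A hunit

lemma rank_phi3 {n : ℕ} (l m : Fin n) (hlm : l ≠ m) (A : Matrix (Fin n) (Fin n) (ZMod 2)) :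
    (Phi3 l m A).rank = A.rank := by
  set D : Matrix (Fin n) (Fin n) (ZMod 2) :=
    fun i j => if i = m ∧ j = l then 1 else 0 with hD
  have hDA : D * A = fun i j => if i = m then A l j else 0 := by
    ext i j
    rw [mul_apply]
    by_cases him : i = m
    · simp [hD, mul_apply, him, ite_mul, one_mul, zero_mul, Finset.sum_ite_eq,
        Finset.mem_univ]
    · simp [hD, mul_apply, him]
  have hNA : Phi3 l m A = (1 + D) * A := by
    rw [add_mul, one_mul, hDA]
    ext i j
    change _ = A i j + (if i = m then A l j else 0)
    by_cases him : i = m <;> simp [Phi3, him, add_comm]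
  have hDD : D * D = 0 := by
    ext i j
    rw [mul_apply]
    by_cases him : i = m
    · subst him
      by_cases hjl : j = l
      · subst hjl
        simp [hD, mul_apply, Ne.symm hlm, Finset.sum_ite_eq]
      · simp [hD, mul_apply, hjl]
    · simp [hD, mul_apply, him]
  have hNN : (1 + D) * (1 + D) = 1 := by
    rw [add_mul, mul_add, mul_add, one_mul, mul_one, hDD, add_zero]
    have : D + D = 0 := by
      ext i j
      exact CharTwo.add_self_eq_zero _
    rw [one_mul, add_assoc, this, add_zero]
  have hunit : IsUnit (1 + D).det := Matrix.isUnit_det_of_right_inverse hNN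
  rw [hNA]
  exact Matrix.rank_mul_eq_right_of_isUnit_det (1 + D) A hunit

lemma bottStep_good_rank {n : ℕ} {X Y : Matrix (Fin n) (Fin n) (ZMod 2)}
    (hX : Good X) (h : BottStep X Y) : Good Y ∧ X.rank = Y.rank := by
  cases h with
  | op1 σ _ => exact ⟨good_phiP σ hX, (rank_phiP σ X).symm⟩
  | op2 k _ => exact ⟨good_phi2 k hX, (rank_phi2 k (good_diag hX k)).symm⟩
  | op3 l m _ hlm hc => exact ⟨good_phi3 l m hc hX, (rank_phi3 l m hlm X).symm⟩

/-- Bott equivalent Bott matrices have the same rank over `𝔽₂`. -/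
theorem rank_bottEquiv_invariant {n : ℕ}
    (A B : Matrix (Fin n) (Fin n) (ZMod 2)) (hA : IsBott A) (hB : IsBott B)
    (h : BottEquivM A B) : A.rank = B.rank := by
  clear hB
  suffices H : Good B ∧ A.rank = B.rank from H.2
  induction h with
  | refl => exact ⟨good_of_isBott hA, rfl⟩
  | tail hab hbc ih =>
      obtain ⟨hg, hr⟩ := ih
      obtain ⟨hg', hr'⟩ := bottStep_good_rank hg hbc
      exact ⟨hg', hr.trans hr'⟩
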